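/- Let D be a finite digraph in which every vertex has out-degree at most k. Then D contains an acyclic set of size at least n/(k+1), where n is the order of D; equivalently τ₀(D) ≤ n·k/(k+1). -/

import Mathlib

open Finset

/-- `S` is an acyclic set for the arc relation `A`. -/
def AcyclicOn {V : Type*} (A : V → V → Prop) (S : Finset V) : Prop :=
  ∀ v : V, ¬ Relation.TransGen (fun x y => x ∈ S ∧ y ∈ S ∧ A x y) v v

/-- Out-degree of `v`. -/
def outDeg {V : Type*} [Fintype V] (A : V → V → Prop) [DecidableRel A] (v : V) : ℕ :=
  (Finset.univ.filter (fun u => A v u)).card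

/-- The feedback vertex number. -/
noncomputable def tau0 {V : Type*} [Fintype V] [DecidableEq V] (A : V → V → Prop) : ℕ :=
  sInf {k : ℕ | ∃ F : Finset V, AcyclicOn A (Finset.univ \ F) ∧ F.card = k}

lemma exists_acyclic_aux {V : Type*} [Fintype V] [DecidableEq V]
    (A : V → V → Prop) [DecidableRel A] (hirr : Irreflexive A)
    (k : ℕ) (hk : ∀ v : V, outDeg A v ≤ k) :
    ∀ T : Finset V, ∃ S : Finset V, S ⊆ T ∧ AcyclicOn A S ∧ T.card ≤ (k + 1) * S.card := by
  intro T
  induction T using Finset.strongInduction with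
  | _ T ih =>
    rcases T.eq_empty_or_nonempty with rfl | ⟨v, hvT⟩
    · refine ⟨∅, Finset.Subset.refl _, ?_, by simp⟩
      intro w h
      cases h with
      | single h => exact absurd h.1 (Finset.notMem_empty w)
      | tail _ h => exact absurd h.2.1 (Finset.notMem_empty w)
    · set N : Finset V := T.filter (fun u => A v u) with hN
      set T' : Finset V := T \ insert v N with hT'
      have hsub : insert v N ⊆ T := by
        intro x hx
        rcases Finset.mem_insert.mp hx with rfl | hx
        · exact hvT
        · exact (Finset.mem_filter.mp hx).1
      have hss : T' ⊂ T :=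
        Finset.sdiff_ssubset hsub ⟨v, Finset.mem_insert_self v N⟩
      obtain ⟨S', hS'T', hacy, hcard⟩ := ih T' hss
      have hS'T : S' ⊆ T := hS'T'.trans (Finset.sdiff_subset)
      have hvS' : v ∉ S' := by
        intro h
        exact (Finset.mem_sdiff.mp (hS'T' h)).2 (Finset.mem_insert_self v N)
      set S : Finset V := insert v S' with hS
      have hvno : ∀ u ∈ S, ¬ A v u := by
        intro u hu hA
        rcases Finset.mem_insert.mp hu with rfl | hu'
        · exact hirr _ hA
        · have huT' := hS'T' hu'
          have huT := (Finset.mem_sdiff.mp huT').1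
          exact (Finset.mem_sdiff.mp huT').2
            (Finset.mem_insert_of_mem (Finset.mem_filter.mpr ⟨huT, hA⟩))
      set R' : V → V → Prop := fun x y => x ∈ S ∧ y ∈ S ∧ A x y with hR'
      set R : V → V → Prop := fun x y => x ∈ S' ∧ y ∈ S' ∧ A x y with hR
      have hnov : ∀ y, ¬ R' v y := fun y h => hvno y h.2.1 h.2.2
      have aux1 : ∀ {a b : V}, Relation.TransGen R' a b → a ≠ v := by
        intro a b h
        induction h using Relation.TransGen.head_induction_on with
        | single h => rintro rfl; exact hnov _ h
        | head h _ _ => rintro rfl; exact hnov _ h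
      have aux2 : ∀ {a b : V}, Relation.TransGen R' a b → b ≠ v →
          Relation.TransGen R a b := by
        intro a b h hb
        induction h using Relation.TransGen.head_induction_on with
        | single h =>
          rename_i a'
          have ha : a' ≠ v := by rintro rfl; exact hnov _ h
          exact Relation.TransGen.single
            ⟨Finset.mem_of_mem_insert_of_ne h.1 ha,
             Finset.mem_of_mem_insert_of_ne h.2.1 hb, h.2.2⟩
        | head h htg ihc =>
          rename_i a' c
          have hc : c ≠ v := aux1 htg
          have ha : a' ≠ v := by rintro rfl; exact hnov _ h
          exact Relation.TransGen.head
            ⟨Finset.mem_of_mem_insert_of_ne h.1 ha,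
             Finset.mem_of_mem_insert_of_ne h.2.1 hc, h.2.2⟩ ihc
      refine ⟨S, ?_, ?_, ?_⟩
      · intro x hx
        rcases Finset.mem_insert.mp hx with rfl | hx
        · exact hvT
        · exact hS'T hx
      · intro w h
        by_cases hw : w = v
        · exact aux1 h hw
        · exact hacy w (aux2 h hw)
      · have h1 : T.card ≤ T'.card + (insert v N).card := by
          rw [hT']
          exact Finset.card_le_card_sdiff_add_card
        have h2 : (insert v N).card ≤ k + 1 := by
          have : N.card ≤ k := by
            refine le_trans ?_ (hk v)
            exact Finset.card_le_card (fun x hx => Finset.mem_filter.mpr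
              ⟨Finset.mem_univ x, (Finset.mem_filter.mp hx).2⟩)
          calc (insert v N).card ≤ N.card + 1 := Finset.card_insert_le v N
            _ ≤ k + 1 := by omega
        have h3 : S.card = S'.card + 1 := Finset.card_insert_of_notMem hvS'
        calc T.card ≤ T'.card + (insert v N).card := h1
          _ ≤ (k + 1) * S'.card + (k + 1) := by omega
          _ = (k + 1) * S.card := by rw [h3]; ring

/-- if every vertex has out-degree at most `k`, then `D` has an acyclic
set of size at least `n/(k+1)`; equivalently `τ₀(D) ≤ n·k/(k+1)`. -/
theorem acyclic_set_of_bounded_outdegree {V : Type*} [Fintype V] [DecidableEq V]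
    (A : V → V → Prop) [DecidableRel A] (hirr : Irreflexive A)
    (k : ℕ) (hk : ∀ v : V, outDeg A v ≤ k)
    (n : ℕ) (hn : n = Fintype.card V) :
    (∃ S : Finset V, AcyclicOn A S ∧ (n : ℝ) / (k + 1) ≤ S.card) ∧
      (tau0 A : ℝ) ≤ n * k / (k + 1) := by
  obtain ⟨S, hSuniv, hacy, hcard⟩ :=
    exists_acyclic_aux A hirr k hk (Finset.univ : Finset V)
  have hn' : n ≤ (k + 1) * S.card := by
    rw [hn, Fintype.card]; exact hcard
  have hk1 : (0 : ℝ) < (k : ℝ) + 1 := by positivity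
  have hmain : (n : ℝ) / (k + 1) ≤ S.card := by
    rw [div_le_iff₀ hk1]
    have hcast : (n : ℝ) ≤ ((k : ℝ) + 1) * S.card := by exact_mod_cast hn'
    linarith
  refine ⟨⟨S, hacy, hmain⟩, ?_⟩
  -- tau0 bound
  set F : Finset V := Finset.univ \ S with hF
  have hcompl : Finset.univ \ F = S := by
    rw [hF, Finset.sdiff_sdiff_self_left, Finset.univ_inter]
  have hmem : F.card ∈ {m : ℕ | ∃ F' : Finset V,
      AcyclicOn A (Finset.univ \ F') ∧ F'.card = m} := by
    exact ⟨F, by rw [hcompl]; exact hacy, rfl⟩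
  have htau : tau0 A ≤ F.card := Nat.sInf_le hmem
  have hFcard : F.card = n - S.card := by
    rw [hF, Finset.card_sdiff_of_subset (Finset.subset_univ S), hn, Fintype.card]
  have hSn : S.card ≤ n := by
    rw [hn, Fintype.card]; exact Finset.card_le_card (Finset.subset_univ S)
  have h1 : (tau0 A : ℝ) ≤ (n : ℝ) - S.card := by
    have : (F.card : ℝ) = (n : ℝ) - S.card := by
      rw [hFcard]; push_cast [Nat.cast_sub hSn]; ring
    calc (tau0 A : ℝ) ≤ (F.card : ℝ) := by exact_mod_cast htau
      _ = (n : ℝ) - S.card := this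
  have h2 : (n : ℝ) - S.card ≤ (n : ℝ) * k / (k + 1) := by
    rw [sub_le_iff_le_add]
    rw [div_add' _ _ _ (ne_of_gt hk1)]
    rw [le_div_iff₀ hk1]
    have : (n : ℝ) ≤ (k + 1) * S.card := by
      exact_mod_cast Nat.cast_le.mpr hn'
    nlinarith [hmain, hk1]
  linarith
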